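/- arXiv:2505.17594 — 7 statements merged into one kernel-verified Lean document; each statement's English description precedes it below -/
import Mathlib

section
/- The function x ↦ μ(x) = -min_{‖d‖≤1} max_{i=1,…,q} ∇f_i(x)ᵀd is continuous on R^n. -/
open scoped RealInnerProductSpace

/-- `max_{i} ⟪g i, d⟫` for a family of gradients `g`. -/
noncomputable def maxG {n q : ℕ} (hq : 0 < q) (g : Fin q → EuclideanSpace ℝ (Fin n))
    (d : EuclideanSpace ℝ (Fin n)) : ℝ :=
  Finset.univ.sup' (Finset.univ_nonempty_iff.mpr (Fin.pos_iff_nonempty.mp hq))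
    (fun i => ⟪g i, d⟫)

/-- The criticality measure `μ(x) = -min_{‖d‖ ≤ 1} max_i ⟪∇f_i(x), d⟫`. -/
noncomputable def mu {n q : ℕ} (hq : 0 < q) (g : Fin q → EuclideanSpace ℝ (Fin n)) : ℝ :=
  - sInf ((maxG hq g) '' Metric.closedBall 0 1)

lemma maxG_comp {n q : ℕ} (hq : 0 < q) (g g' : Fin q → EuclideanSpace ℝ (Fin n)) (C : ℝ)
    (hC : ∀ i, ‖g i - g' i‖ ≤ C) (d : EuclideanSpace ℝ (Fin n)) (hd : ‖d‖ ≤ 1) :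
    maxG hq g d ≤ maxG hq g' d + C := by
  have hC0 : 0 ≤ C := le_trans (norm_nonneg _) (hC ⟨0, hq⟩)
  apply Finset.sup'_le
  intro i _
  have h1 : ⟪g i, d⟫ = ⟪g' i, d⟫ + ⟪g i - g' i, d⟫ := by
    rw [inner_sub_left]; ring
  have h2 : ⟪g' i, d⟫ ≤ maxG hq g' d := by
    unfold maxG; exact Finset.le_sup' (fun j => ⟪g' j, d⟫) (Finset.mem_univ i)
  have h3 : ⟪g i - g' i, d⟫ ≤ ‖g i - g' i‖ * ‖d‖ := real_inner_le_norm _ _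
  have h4 : ‖g i - g' i‖ * ‖d‖ ≤ C := by
    calc ‖g i - g' i‖ * ‖d‖ ≤ C * 1 := by
          apply mul_le_mul (hC i) hd (norm_nonneg _) hC0
      _ = C := mul_one C
  linarith

lemma mu_sub_le {n q : ℕ} (hq : 0 < q) (g g' : Fin q → EuclideanSpace ℝ (Fin n)) (C : ℝ)
    (hC : ∀ i, ‖g i - g' i‖ ≤ C) :
    mu hq g' - mu hq g ≤ C := by
  set A := (maxG hq g) '' Metric.closedBall (0 : EuclideanSpace ℝ (Fin n)) 1 with hA
  set B := (maxG hq g') '' Metric.closedBall (0 : EuclideanSpace ℝ (Fin n)) 1 with hB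
  have hSne : (Metric.closedBall (0 : EuclideanSpace ℝ (Fin n)) 1).Nonempty :=
    ⟨0, Metric.mem_closedBall_self zero_le_one⟩
  have hAne : A.Nonempty := hSne.image _
  have hBne : B.Nonempty := hSne.image _
  have i0 : Fin q := ⟨0, hq⟩
  have hAbdd : BddBelow A := by
    refine ⟨-‖g i0‖, ?_⟩
    rintro a ⟨d, hd, rfl⟩
    have hd1 : ‖d‖ ≤ 1 := by simpa using hd
    have h2 : ⟪g i0, d⟫ ≤ maxG hq g d := by
      unfold maxG; exact Finset.le_sup' (fun j => ⟪g j, d⟫) (Finset.mem_univ i0)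
    have h3 : -(‖g i0‖ * ‖d‖) ≤ ⟪g i0, d⟫ := neg_le_of_neg_le (by
      have := real_inner_le_norm (g i0) (-d)
      simpa [inner_neg_right] using this)
    have h4 : ‖g i0‖ * ‖d‖ ≤ ‖g i0‖ * 1 :=
      mul_le_mul_of_nonneg_left hd1 (norm_nonneg _)
    simp only [mul_one] at h4
    linarith
  have key : sInf A - C ≤ sInf B := by
    apply le_csInf hBne
    rintro b ⟨d, hd, rfl⟩
    have hd1 : ‖d‖ ≤ 1 := by simpa using hd
    have h1 : maxG hq g d ≤ maxG hq g' d + C := maxG_comp hq g g' C hC d hd1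
    have h2 : sInf A ≤ maxG hq g d := csInf_le hAbdd ⟨d, hd, rfl⟩
    linarith
  simp only [mu, ← hA, ← hB]
  linarith

lemma mu_lipschitz {n q : ℕ} (hq : 0 < q) :
    LipschitzWith 1 (mu (n := n) hq) := by
  apply LipschitzWith.of_dist_le_mul
  intro g g'
  have hC : ∀ i, ‖g i - g' i‖ ≤ dist g g' := by
    intro i
    rw [← dist_eq_norm]
    exact dist_le_pi_dist g g' i
  have hC' : ∀ i, ‖g' i - g i‖ ≤ dist g g' := by
    intro i
    rw [← dist_eq_norm, dist_comm]
    exact dist_le_pi_dist g g' i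
  have h1 := mu_sub_le hq g g' (dist g g') hC
  have h2 := mu_sub_le hq g' g (dist g g') hC'
  rw [Real.dist_eq, abs_le]
  push_cast
  rw [one_mul]
  constructor <;> linarith

/-- The criticality measure `x ↦ μ(x)` is continuous. -/
theorem stmt6 {n q : ℕ} (hq : 0 < q) (f : Fin q → EuclideanSpace ℝ (Fin n) → ℝ)
    (hf : ∀ i, ContDiff ℝ 1 (f i)) :
    Continuous (fun x => mu hq (fun i => gradient (f i) x)) := by
  have hgrad : ∀ i, Continuous (fun x => gradient (f i) x) := by
    intro i
    have h1 : Continuous (fun x => fderiv ℝ (f i) x) :=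
      (hf i).continuous_fderiv one_ne_zero
    have h2 : Continuous (fun L : EuclideanSpace ℝ (Fin n) →L[ℝ] ℝ =>
        (InnerProductSpace.toDual ℝ (EuclideanSpace ℝ (Fin n))).symm L) :=
      (InnerProductSpace.toDual ℝ _).symm.continuous
    exact h2.comp h1
  have hcont : Continuous (fun x => (fun i => gradient (f i) x)) :=
    continuous_pi fun i => hgrad i
  exact (mu_lipschitz hq).continuous.comp hcont
end

section
/- Suppose f : R^n → R has an L-Lipschitz continuous gradient, and y, d ∈ R^n with ‖d‖ = 1, and α > 0, δ ∈ (0,1), γ > 0 satisfy f(y + (α/δ)d) ≥ f(y + αd) − γ(α/δ)². Then −∇f(y)ᵀd ≤ α·(1+δ)/(δ(1−δ))·(L + γ). -/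
open scoped RealInnerProductSpace

lemma key {n : ℕ} (f : EuclideanSpace ℝ (Fin n) → ℝ) (hf : Differentiable ℝ f)
    (L : ℝ) (hL : 0 ≤ L)
    (hlip : ∀ a b : EuclideanSpace ℝ (Fin n), ‖gradient f a - gradient f b‖ ≤ L * ‖a - b‖)
    (x v : EuclideanSpace ℝ (Fin n)) :
    |f (x + v) - f x - ⟪gradient f x, v⟫| ≤ L * ‖v‖ ^ 2 := by
  set c : ℝ := ⟪gradient f x, v⟫ with hc
  set g : ℝ → ℝ := fun t => f (x + t • v) - t * c with hg
  have hderiv : ∀ t ∈ Set.Icc (0:ℝ) 1,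
      HasDerivWithinAt g (⟪gradient f (x + t • v), v⟫ - c) (Set.Icc 0 1) t := by
    intro t ht
    have h1 : HasDerivAt (fun t : ℝ => x + t • v) v t := by
      simpa using ((hasDerivAt_id t).smul_const v).const_add x
    have h2 : HasFDerivAt f (InnerProductSpace.toDual ℝ _ (gradient f (x + t • v)))
        (x + t • v) := ((hf _).hasGradientAt).hasFDerivAt
    have h3 : HasDerivAt (fun t : ℝ => f (x + t • v)) (⟪gradient f (x + t • v), v⟫) t := by
      have := h2.comp_hasDerivAt t h1; rw [InnerProductSpace.toDual_apply_apply] at this; exact this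
    have h4 : HasDerivAt (fun t : ℝ => t * c) c t := by
      simpa using (hasDerivAt_id t).mul_const c
    exact (h3.sub h4).hasDerivWithinAt
  have hbound : ∀ t ∈ Set.Icc (0:ℝ) 1, ‖⟪gradient f (x + t • v), v⟫ - c‖ ≤ L * ‖v‖ ^ 2 := by
    intro t ht
    have : ⟪gradient f (x + t • v), v⟫ - c = ⟪gradient f (x + t • v) - gradient f x, v⟫ := by
      rw [inner_sub_left]
    rw [this]
    calc ‖⟪gradient f (x + t • v) - gradient f x, v⟫‖
        ≤ ‖gradient f (x + t • v) - gradient f x‖ * ‖v‖ := norm_inner_le_norm _ _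
      _ ≤ (L * ‖x + t • v - x‖) * ‖v‖ := by
          gcongr; exact hlip _ _
      _ = L * t * ‖v‖ * ‖v‖ := by
          rw [add_sub_cancel_left, norm_smul, Real.norm_eq_abs, abs_of_nonneg ht.1]; ring
      _ ≤ L * ‖v‖ ^ 2 := by nlinarith [ht.2, ht.1, norm_nonneg v, mul_nonneg hL (sq_nonneg ‖v‖)]
  have := (convex_Icc (0:ℝ) 1).norm_image_sub_le_of_norm_hasDerivWithin_le
    hderiv hbound (Set.left_mem_Icc.2 zero_le_one) (Set.right_mem_Icc.2 zero_le_one)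
  simp only [hg] at this
  rw [show f (x + v) - f x - c = f (x + v) - c - f x by ring]
  simpa using this

/-- If `f` has `L`-Lipschitz gradient, `‖d‖ = 1`, `α > 0`, `δ ∈ (0,1)`, `γ > 0` and the
expansion step fails: `f(y + (α/δ)d) ≥ f(y + αd) - γ(α/δ)²`, then
`-⟪∇f(y), d⟫ ≤ α·(1+δ)/(δ(1-δ))·(L + γ)`. -/
theorem stmt9 {n : ℕ} (f : EuclideanSpace ℝ (Fin n) → ℝ) (hf : Differentiable ℝ f)
    (L : ℝ) (hL : 0 < L)
    (hlip : ∀ a b : EuclideanSpace ℝ (Fin n), ‖gradient f a - gradient f b‖ ≤ L * ‖a - b‖)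
    (y d : EuclideanSpace ℝ (Fin n)) (hd : ‖d‖ = 1) (α δ γ : ℝ)
    (hα : 0 < α) (hδ : δ ∈ Set.Ioo (0 : ℝ) 1) (hγ : 0 < γ)
    (hfail : f (y + (α / δ) • d) ≥ f (y + α • d) - γ * (α / δ) ^ 2) :
    -⟪gradient f y, d⟫ ≤ α * (1 + δ) / (δ * (1 - δ)) * (L + γ) := by
  obtain ⟨hδ0, hδ1⟩ := hδ
  set g : ℝ := ⟪gradient f y, d⟫ with hgdef
  set β : ℝ := α / δ with hβdef
  have hβ : 0 < β := div_pos hα hδ0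
  have hδβ : δ * β = α := by rw [hβdef]; field_simp
  clear_value β
  have hiβ : ⟪gradient f y, β • d⟫ = β * g := real_inner_smul_right _ _ _
  have hiα : ⟪gradient f y, α • d⟫ = α * g := real_inner_smul_right _ _ _
  have hnβ : ‖β • d‖ ^ 2 = β ^ 2 := by
    rw [norm_smul, hd, Real.norm_eq_abs, mul_one, sq_abs]
  have hnα : ‖α • d‖ ^ 2 = α ^ 2 := by
    rw [norm_smul, hd, Real.norm_eq_abs, mul_one, sq_abs]
  have h1 := key f hf L hL.le hlip y (β • d)
  have h2 := key f hf L hL.le hlip y (α • d)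
  rw [hiβ, hnβ] at h1
  rw [hiα, hnα] at h2
  rw [abs_le] at h1 h2
  have hfail' : f (y + β • d) ≥ f (y + α • d) - γ * β ^ 2 := hfail
  have hkey : -g * (β - α) ≤ L * α ^ 2 + L * β ^ 2 + γ * β ^ 2 := by
    nlinarith [h1.2, h2.1, hfail']
  subst hδβ
  rw [div_mul_eq_mul_div, le_div_iff₀ (mul_pos hδ0 (by linarith : (0:ℝ) < 1 - δ))]
  have hmul := mul_le_mul_of_nonneg_left hkey (mul_pos hδ0 hβ).le
  have hfin : -g * (δ * (1 - δ)) * β ^ 2 ≤ δ * β * (1 + δ) * (L + γ) * β ^ 2 := by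
    nlinarith [hmul, mul_nonneg (mul_nonneg (mul_pos hδ0 hδ0).le
      (mul_pos (mul_pos hβ hβ) hβ).le) (by nlinarith : (0:ℝ) ≤ L * (1 - δ) + γ)]
  exact le_of_mul_le_mul_right hfin (by positivity)
end

section
/- Let A be a finite subset of R^q, ρ ∈ R^q, ν > 0, and y ∈ R^q be such that y_i + ν ≤ ρ_i for all i, and for every a ∈ A there exists an index ℓ with y_ℓ + ν ≤ a_ℓ (i.e., y is not within ν of being dominated: y is not componentwise > a − ν·1 for any a ∈ A). Then HI(A ∪ {y}) − HI(A) ≥ ν^q, where HI(S) = vol(⋃_{a∈S}[a,ρ]). -/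
open MeasureTheory

/-- Sufficient hypervolume increase: if `y i + ν ≤ ρ i` for all `i` and for every `a ∈ A`
there is an index `ℓ` with `y ℓ + ν ≤ a ℓ`, then `HI(A ∪ {y}) - HI(A) ≥ ν^q`. -/
theorem stmt12 {q : ℕ} (A : Finset (Fin q → ℝ)) (ρ : Fin q → ℝ) (ν : ℝ) (hν : 0 < ν)
    (y : Fin q → ℝ) (hyρ : ∀ i, y i + ν ≤ ρ i)
    (hnd : ∀ a ∈ A, ∃ ℓ, y ℓ + ν ≤ a ℓ) :
    ENNReal.ofReal (ν ^ q) ≤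
      volume (⋃ a ∈ (insert y A : Finset (Fin q → ℝ)), Set.Icc a ρ) -
        volume (⋃ a ∈ A, Set.Icc a ρ) := by
  set S : Set (Fin q → ℝ) := Set.univ.pi (fun i => Set.Ico (y i) (y i + ν)) with hS
  set U : Set (Fin q → ℝ) := ⋃ a ∈ A, Set.Icc a ρ with hU
  have hUmeas : MeasurableSet U := by
    exact MeasurableSet.biUnion A.countable_toSet (fun a _ => measurableSet_Icc)
  have hSvol : volume S = ENNReal.ofReal (ν ^ q) := by
    rw [hS, volume_pi_pi]
    simp [Real.volume_Ico, ← ENNReal.ofReal_pow hν.le]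
  have hdisj : Disjoint S U := by
    rw [Set.disjoint_iff_forall_ne]
    rintro w hw w' hw' rfl
    simp only [hU, Set.mem_iUnion] at hw'
    obtain ⟨a, ha, hwa⟩ := hw'
    obtain ⟨ℓ, hℓ⟩ := hnd a ha
    have h1 := (hw ℓ (Set.mem_univ ℓ)).2
    have h2 := hwa.1 ℓ
    linarith
  have hsub : S ∪ U ⊆ ⋃ a ∈ (insert y A : Finset (Fin q → ℝ)), Set.Icc a ρ := by
    intro w hw
    rcases hw with hw | hw
    · simp only [Set.mem_iUnion]
      refine ⟨y, Finset.mem_insert_self y A, fun i => (hw i (Set.mem_univ i)).1, fun i => ?_⟩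
      have := (hw i (Set.mem_univ i)).2
      have := hyρ i
      linarith
    · simp only [hU, Set.mem_iUnion] at hw
      obtain ⟨a, ha, hwa⟩ := hw
      simp only [Set.mem_iUnion]
      exact ⟨a, Finset.mem_insert_of_mem ha, hwa⟩
  have hUfin : volume U ≠ ⊤ := by
    refine ne_top_of_le_ne_top ?_ (measure_biUnion_finset_le A (fun a => Set.Icc a ρ))
    exact (ENNReal.sum_lt_top.2 fun a _ => (measure_Icc_lt_top).ne |> lt_top_iff_ne_top.2).ne
  have key : volume U + ENNReal.ofReal (ν ^ q) ≤
      volume (⋃ a ∈ (insert y A : Finset (Fin q → ℝ)), Set.Icc a ρ) := by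
    calc volume U + ENNReal.ofReal (ν ^ q) = volume (S ∪ U) := by
          rw [measure_union hdisj hUmeas, hSvol, add_comm]
      _ ≤ _ := measure_mono hsub
  exact ENNReal.le_sub_of_add_le_left hUfin key
end

section
/- Let A be a finite subset of R^q and ρ ∈ R^q with a < ρ componentwise for all a ∈ A ∪ {y}, with ρ sufficiently large (ρ = f_max + s·1, s large). If HI(A ∪ {y}) − HI(A) > 0, then y is non-dominated by A: for every a ∈ A, it is not the case that a ≤ y (componentwise with a ≠ y), and y ≠ a. Moreover there exists ε > 0 such that for every a ∈ A there is an index ℓ with y_ℓ + ε < a_ℓ. -/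
open MeasureTheory

/-- If adding `y` strictly increases the hypervolume, then `y` is non-dominated by every
`a ∈ A`, and moreover there is a uniform `ε > 0` such that for every `a ∈ A` some coordinate
`ℓ` satisfies `y ℓ + ε < a ℓ`. -/
theorem stmt13 {q : ℕ} (A : Finset (Fin q → ℝ)) (ρ y : Fin q → ℝ)
    (hdom : ∀ a ∈ (insert y A : Finset (Fin q → ℝ)), ∀ i, a i < ρ i)
    (hHI : volume (⋃ a ∈ A, Set.Icc a ρ) <
      volume (⋃ a ∈ (insert y A : Finset (Fin q → ℝ)), Set.Icc a ρ)) :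
    (∀ a ∈ A, ¬((∀ i, a i ≤ y i) ∧ a ≠ y)) ∧
      ∃ ε > (0 : ℝ), ∀ a ∈ A, ∃ ℓ, y ℓ + ε < a ℓ := by
  have key : ∀ a ∈ A, ∃ ℓ, y ℓ < a ℓ := by
    intro a ha
    by_contra h
    push_neg at h
    -- a ≤ y, so Icc y ρ ⊆ Icc a ρ, the union doesn't grow
    have hsub : Set.Icc y ρ ⊆ Set.Icc a ρ := by
      intro x hx
      exact ⟨fun i => (h i).trans (hx.1 i), hx.2⟩
    have heq : (⋃ b ∈ (insert y A : Finset (Fin q → ℝ)), Set.Icc b ρ)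
        = ⋃ b ∈ A, Set.Icc b ρ := by
      apply Set.Subset.antisymm
      · intro x hx
        simp only [Set.mem_iUnion, Finset.mem_insert] at hx ⊢
        obtain ⟨b, hb, hxb⟩ := hx
        rcases hb with rfl | hb
        · exact ⟨a, ha, hsub hxb⟩
        · exact ⟨b, hb, hxb⟩
      · intro x hx
        simp only [Set.mem_iUnion, Finset.mem_insert] at hx ⊢
        obtain ⟨b, hb, hxb⟩ := hx
        exact ⟨b, Or.inr hb, hxb⟩
    rw [heq] at hHI
    exact lt_irrefl _ hHI
  constructor
  · intro a ha ⟨hle, _⟩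
    obtain ⟨ℓ, hℓ⟩ := key a ha
    exact absurd (hle ℓ) (not_le.mpr hℓ)
  · rcases A.eq_empty_or_nonempty with rfl | hne
    · exact ⟨1, one_pos, fun a ha => absurd ha (Finset.notMem_empty a)⟩
    · classical
      set F : (Fin q → ℝ) → ℝ := fun a =>
        if h' : ∃ ℓ, y ℓ < a ℓ then (a (Classical.choose h') - y (Classical.choose h')) / 2
        else 1 with hF
      refine ⟨A.inf' hne F, ?_, ?_⟩
      · rw [gt_iff_lt, Finset.lt_inf'_iff]
        intro a ha
        obtain h' := key a ha
        simp only [hF, dif_pos h']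
        have := Classical.choose_spec h'
        linarith
      · intro a ha
        obtain h' := key a ha
        refine ⟨Classical.choose h', ?_⟩
        have hspec := Classical.choose_spec h'
        have hinf : A.inf' hne F ≤ F a := Finset.inf'_le F ha
        have hFa : F a = (a (Classical.choose h') - y (Classical.choose h')) / 2 := by
          simp only [hF, dif_pos h']
        linarith
end

section
/- Let A be a finite subset of R^q, ρ ∈ R^q with a < ρ for all a ∈ A, and y ∈ R^q with y < ρ. Suppose that for every a ∈ A there exists ε > 0 and an index ℓ with y_ℓ + ε < a_ℓ, with ε uniform over A and y + ε·1 ≤ ρ. Then HI(A ∪ {y}) − HI(A) ≥ ε^q. -/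
open MeasureTheory

/-- If `y` is uniformly non-dominated with margin `ε > 0` (for every `a ∈ A` some coordinate
`ℓ` satisfies `y ℓ + ε < a ℓ`) and `y + ε·1 ≤ ρ` componentwise, then the hypervolume increases
by at least `ε^q`. -/
theorem stmt14 {q : ℕ} (A : Finset (Fin q → ℝ)) (ρ y : Fin q → ℝ)
    (hdomA : ∀ a ∈ A, ∀ i, a i < ρ i) (hy : ∀ i, y i < ρ i)
    (ε : ℝ) (hε : 0 < ε) (hyρ : ∀ i, y i + ε ≤ ρ i)
    (hnd : ∀ a ∈ A, ∃ ℓ, y ℓ + ε < a ℓ) :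
    ENNReal.ofReal (ε ^ q) ≤
      volume (⋃ a ∈ (insert y A : Finset (Fin q → ℝ)), Set.Icc a ρ) -
        volume (⋃ a ∈ A, Set.Icc a ρ) := by
  set U := ⋃ a ∈ A, Set.Icc a ρ with hU
  set C := Set.Icc y (fun i => y i + ε) with hC
  have hCvol : volume C = ENNReal.ofReal (ε ^ q) := by
    rw [hC, Real.volume_Icc_pi]
    simp [ENNReal.ofReal_pow hε.le]
  have hUmeas : MeasurableSet U := by
    apply Set.Finite.measurableSet_biUnion (A.finite_toSet)
    intro a _; exact measurableSet_Icc
  have hdisj : Disjoint C U := by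
    rw [Set.disjoint_left]
    rintro x ⟨hx1, hx2⟩ hxU
    simp only [hU, Set.mem_iUnion, Set.mem_Icc] at hxU
    obtain ⟨a, ha, hxa, -⟩ := hxU
    obtain ⟨ℓ, hℓ⟩ := hnd a ha
    have h1 := hx2 ℓ
    have h2 := hxa ℓ
    simp only at h1
    linarith
  have hsub : C ∪ U ⊆ ⋃ a ∈ (insert y A : Finset (Fin q → ℝ)), Set.Icc a ρ := by
    rw [Finset.set_biUnion_insert]
    apply Set.union_subset_union _ le_rfl
    intro x hx
    rcases hx with ⟨h1, h2⟩
    exact ⟨h1, fun i => le_trans (h2 i) (hyρ i)⟩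
  have key : ENNReal.ofReal (ε ^ q) + volume U ≤
      volume (⋃ a ∈ (insert y A : Finset (Fin q → ℝ)), Set.Icc a ρ) := by
    rw [← hCvol, ← measure_union hdisj hUmeas]
    exact measure_mono hsub
  have hUfin : volume U ≠ ⊤ := by
    refine (measure_biUnion_lt_top A.finite_toSet fun a _ => ?_).ne
    exact (isCompact_Icc.measure_lt_top)
  exact ENNReal.le_sub_of_add_le_right hUfin key
end

section
/- Suppose H_k = HI(F(X_k)) is nondecreasing and bounded above by H̄, Δ_k ≥ 0, and Φ_k := −H_k + η Δ_k^{2q} with η > 0. Assume at every iteration one of three cases holds: (a) H_{k+1} = H_k and Δ_{k+1} ≤ θΔ_k with θ ∈ (0,1); (b) H_{k+1} − H_k ≥ (γ c² Δ_{k+1}²)^q and Δ_{k+1} ≤ Δ_k; (c) H_{k+1} − H_k ≥ (γ Δ_{k+1}²)^q and Δ_{k+1} > Δ_k. Then, with 0 < η < γ^q, Φ_{k+1} − Φ_k ≤ −c̃ Δ_{k+1}^{2q} where c̃ = min{η(1−θ^{2q})/θ^{2q}, γ^q c^{2q}, γ^q − η}. -/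
/-- Abstract sufficient decrease of the cost function `Φ_k = -H_k + η Δ_k^{2q}`:
under the three-case hypothesis on the hypervolume increase/stepsize behavior, we get
`Φ_{k+1} - Φ_k ≤ -c̃ Δ_{k+1}^{2q}` with
`c̃ = min{η(1-θ^{2q})/θ^{2q}, γ^q c^{2q}, γ^q - η}`. -/
theorem stmt17 (q : ℕ) (hq : 1 ≤ q) (θ c γ η Hbar : ℝ)
    (hθ : θ ∈ Set.Ioo (0 : ℝ) 1) (hc : c ∈ Set.Ioo (0 : ℝ) 1)
    (hγ : γ ∈ Set.Ioo (0 : ℝ) 1) (hη0 : 0 < η) (hηγ : η < γ ^ q)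
    (H Δ : ℕ → ℝ) (hmono : Monotone H) (hub : ∀ k, H k ≤ Hbar) (hΔ : ∀ k, 0 ≤ Δ k)
    (hcase : ∀ k,
      (H (k + 1) = H k ∧ Δ (k + 1) ≤ θ * Δ k) ∨
      ((γ * c ^ 2 * (Δ (k + 1)) ^ 2) ^ q ≤ H (k + 1) - H k ∧ Δ (k + 1) ≤ Δ k) ∨
      ((γ * (Δ (k + 1)) ^ 2) ^ q ≤ H (k + 1) - H k ∧ Δ k < Δ (k + 1))) :
    ∀ k, (-H (k + 1) + η * (Δ (k + 1)) ^ (2 * q)) - (-H k + η * (Δ k) ^ (2 * q)) ≤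
      -(min (min (η * (1 - θ ^ (2 * q)) / θ ^ (2 * q)) (γ ^ q * c ^ (2 * q))) (γ ^ q - η)) *
        (Δ (k + 1)) ^ (2 * q) := by
  intro k
  obtain ⟨hθ0, hθ1⟩ := hθ
  obtain ⟨hc0, hc1⟩ := hc
  obtain ⟨hγ0, hγ1⟩ := hγ
  have ha0 : 0 ≤ Δ (k + 1) ^ (2 * q) := pow_nonneg (hΔ _) _
  have hb0 : 0 ≤ Δ k ^ (2 * q) := pow_nonneg (hΔ _) _
  have ht0 : (0 : ℝ) < θ ^ (2 * q) := pow_pos hθ0 _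
  have hγq : (0 : ℝ) < γ ^ q := pow_pos hγ0 _
  set a := Δ (k + 1) ^ (2 * q) with ha
  set b := Δ k ^ (2 * q) with hb
  set cm := min (min (η * (1 - θ ^ (2 * q)) / θ ^ (2 * q)) (γ ^ q * c ^ (2 * q))) (γ ^ q - η)
    with hcm
  rcases hcase k with ⟨hH, hd⟩ | ⟨hH, hd⟩ | ⟨hH, hd⟩
  · -- case (a)
    have h1 : a ≤ θ ^ (2 * q) * b := by
      calc a ≤ (θ * Δ k) ^ (2 * q) := pow_le_pow_left₀ (hΔ _) hd _
        _ = θ ^ (2 * q) * b := mul_pow _ _ _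
    set D := η * (1 - θ ^ (2 * q)) / θ ^ (2 * q) with hD
    have hDt : θ ^ (2 * q) * D = η * (1 - θ ^ (2 * q)) := by
      rw [hD]; field_simp
    have h2 : θ ^ (2 * q) * (η * (a - b)) ≤ θ ^ (2 * q) * (-D * a) := by
      nlinarith [mul_le_mul_of_nonneg_left h1 hη0.le]
    have h3 : η * (a - b) ≤ -D * a := le_of_mul_le_mul_left h2 ht0
    have hm : cm ≤ D := le_trans (min_le_left _ _) (min_le_left _ _)
    have h4 : cm * a ≤ D * a := mul_le_mul_of_nonneg_right hm ha0
    have hHeq : H (k + 1) = H k := hH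
    linarith
  · -- case (b)
    have hHb : γ ^ q * c ^ (2 * q) * a ≤ H (k + 1) - H k := by
      calc γ ^ q * c ^ (2 * q) * a = (γ * c ^ 2 * Δ (k + 1) ^ 2) ^ q := by
            rw [mul_pow, mul_pow, ← pow_mul, ← pow_mul]
        _ ≤ H (k + 1) - H k := hH
    have h1 : a ≤ b := pow_le_pow_left₀ (hΔ _) hd _
    have hm : cm ≤ γ ^ q * c ^ (2 * q) := le_trans (min_le_left _ _) (min_le_right _ _)
    have h4 : cm * a ≤ γ ^ q * c ^ (2 * q) * a := mul_le_mul_of_nonneg_right hm ha0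
    nlinarith
  · -- case (c)
    have hHb : γ ^ q * a ≤ H (k + 1) - H k := by
      calc γ ^ q * a = (γ * Δ (k + 1) ^ 2) ^ q := by rw [mul_pow, ← pow_mul]
        _ ≤ H (k + 1) - H k := hH
    have hm : cm ≤ γ ^ q - η := min_le_right _ _
    have h4 : cm * a ≤ (γ ^ q - η) * a := mul_le_mul_of_nonneg_right hm ha0
    nlinarith
end

section
/- In R², consider the bi-objective functions f¹(x) = x² and f²(x) = (x−4)²/18, the points x₀ = 1 and x₁ = 0, and reference point ρ = (49, 25/18). Then the hypervolume of {F(x₀), F(x₁)} with respect to ρ exceeds the hypervolume of {F(x₀)} by exactly 1/2, which is strictly less than (f¹(x₀) − f¹(x₁))² = 1. -/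
open MeasureTheory

private lemma volIcc (a b c d : ℝ) (hab : a ≤ b) (hcd : c ≤ d) :
    volume (Set.Icc ![a, c] ![b, d]) = ENNReal.ofReal ((b - a) * (d - c)) := by
  rw [Real.volume_Icc_pi, Fin.prod_univ_two]
  simp only [Matrix.cons_val_zero, Matrix.cons_val_one, Matrix.head_cons]
  rw [← ENNReal.ofReal_mul (by linarith)]

/-- Example of Remark A.1: for `f¹(x) = x²`, `f²(x) = (x-4)²/18`, points `x₀ = 1`, `x₁ = 0`
and reference point `ρ = (49, 25/18)`, the hypervolume of `{F(x₀), F(x₁)}` exceeds that of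
`{F(x₀)}` by exactly `1/2`, which is strictly less than `(f¹(x₀) - f¹(x₁))² = 1`. -/
theorem stmt19 (f₁ f₂ : ℝ → ℝ) (hf₁ : ∀ x, f₁ x = x ^ 2)
    (hf₂ : ∀ x, f₂ x = (x - 4) ^ 2 / 18) :
    volume (Set.Icc ![f₁ 1, f₂ 1] ![(49 : ℝ), 25 / 18] ∪
        Set.Icc ![f₁ 0, f₂ 0] ![(49 : ℝ), 25 / 18]) =
      volume (Set.Icc ![f₁ 1, f₂ 1] ![(49 : ℝ), 25 / 18]) + ENNReal.ofReal (1 / 2) ∧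
    (1 / 2 : ℝ) < (f₁ 1 - f₁ 0) ^ 2 := by
  have h1 : f₁ 1 = 1 := by rw [hf₁]; norm_num
  have h0 : f₁ 0 = 0 := by rw [hf₁]; norm_num
  have g1 : f₂ 1 = 1 / 2 := by rw [hf₂]; norm_num
  have g0 : f₂ 0 = 8 / 9 := by rw [hf₂]; norm_num
  rw [h1, h0, g1, g0]
  refine ⟨?_, by norm_num⟩
  have hinter : Set.Icc ![(1:ℝ), 1/2] ![(49:ℝ), 25/18] ∩ Set.Icc ![(0:ℝ), 8/9] ![(49:ℝ), 25/18]
      = Set.Icc ![(1:ℝ), 8/9] ![(49:ℝ), 25/18] := by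
    have hsup : (![(1:ℝ), 1/2] ⊔ ![(0:ℝ), 8/9]) = ![(1:ℝ), 8/9] := by
      funext i; fin_cases i <;> simp [Pi.sup_apply, max_def] <;> norm_num
    have hinf : (![(49:ℝ), 25/18] ⊓ ![(49:ℝ), 25/18]) = ![(49:ℝ), 25/18] := by
      funext i; fin_cases i <;> simp [Pi.inf_apply]
    rw [Set.Icc_inter_Icc, hsup, hinf]
  have key := measure_union_add_inter (μ := volume)
    (Set.Icc ![(1:ℝ), 1/2] ![(49:ℝ), 25/18]) (measurableSet_Icc (b := ![(49:ℝ), 25/18])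
      (a := ![(0:ℝ), 8/9]))
  rw [hinter] at key
  rw [volIcc 1 49 (1/2) (25/18) (by norm_num) (by norm_num)] at key ⊢
  rw [volIcc 0 49 (8/9) (25/18) (by norm_num) (by norm_num)] at key
  rw [volIcc 1 49 (8/9) (25/18) (by norm_num) (by norm_num)] at key
  norm_num at key ⊢
  have : ENNReal.ofReal (128/3) + ENNReal.ofReal (49/2)
      = (ENNReal.ofReal (128/3) + ENNReal.ofReal (1/2)) + ENNReal.ofReal 24 := by
    rw [← ENNReal.ofReal_add (by norm_num) (by norm_num),
      ← ENNReal.ofReal_add (by norm_num) (by norm_num),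
      ← ENNReal.ofReal_add (by norm_num) (by norm_num)]
    norm_num
  rw [this] at key
  rw [show ENNReal.ofReal 24 = 24 by norm_num] at key
  exact WithTop.add_right_cancel (by exact ENNReal.ofNat_ne_top) key
end
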